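/- If λ is a partition of N > 0 that is not a rectangle (i.e., not of the form (aᵇ) for positive integers a, b), then the number of distinct partitions reachable from λ in LCTR (i.e., obtainable by one or more applications of the moves L and T, including the empty partition) is strictly less than N. -/

import Mathlib

/-- Remove the left column of a Young diagram: subtract 1 from each part and
omit nonpositive values. -/
def leftCol (l : List ℕ) : List ℕ := (l.map (· - 1)).filter (0 < ·)

/-- Remove the top row of a Young diagram. -/
def topRow (l : List ℕ) : List ℕ := l.tail

/-- Minimum excluded value of a set of naturals. -/
noncomputable def mex (s : Set ℕ) : ℕ := sInf {n | n ∉ s}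

def wt (l : List ℕ) : ℕ := l.sum + l.length

lemma wt_leftCol_le (l : List ℕ) : wt (leftCol l) ≤ l.sum := by
  induction l with
  | nil => simp [leftCol, wt]
  | cons a t ih =>
    simp only [leftCol, wt] at ih ⊢
    rw [List.map_cons, List.filter_cons]
    by_cases h : 0 < a - 1
    · simp only [h, decide_true, if_true, List.sum_cons, List.length_cons]
      omega
    · simp only [h, decide_false, Bool.false_eq_true, if_false, List.sum_cons]
      omega

lemma wt_leftCol_lt (l : List ℕ) (h : l ≠ []) : wt (leftCol l) < wt l := by
  have h1 := wt_leftCol_le l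
  have h2 : 0 < l.length := List.length_pos_iff.mpr h
  unfold wt at *
  omega

lemma wt_topRow_lt (l : List ℕ) (h : l ≠ []) : wt (topRow l) < wt l := by
  cases l with
  | nil => exact absurd rfl h
  | cons a t => simp [topRow, wt]; omega

/-- The Sprague–Grundy value of a position in the LCTR game. -/
noncomputable def SG (l : List ℕ) : ℕ :=
  if h : l = [] then 0
  else mex {SG (leftCol l), SG (topRow l)}
termination_by wt l
decreasing_by
  · exact wt_leftCol_lt l h
  · exact wt_topRow_lt l h

/-- A partition: a non-increasing list of positive integers. -/
def IsPartition (l : List ℕ) : Prop := l.Pairwise (· ≥ ·) ∧ ∀ x ∈ l, 0 < x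

/-- The conjugate partition: the `j`-th part (for `1 ≤ j ≤ l₁`) is the number
of parts of `l` that are at least `j`. -/
def conj (l : List ℕ) : List ℕ :=
  (List.range (l.headD 0)).map (fun j => l.countP (fun x => decide (j < x)))

/-- One move in LCTR: remove the left column or the top row of a nonempty partition. -/
def Move (l m : List ℕ) : Prop := l ≠ [] ∧ (m = leftCol l ∨ m = topRow l)

/-- `m` is reachable from `l` by one or more moves of LCTR. -/
def Reachable (l m : List ℕ) : Prop := Relation.TransGen Move l m

def gpos (l : List ℕ) (p : ℕ × ℕ) : List ℕ := ((l.drop p.2).map (· - p.1)).filter (0 < ·)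

lemma leftCol_cons (x : ℕ) (s : List ℕ) :
    leftCol (x :: s) = if 0 < x - 1 then (x - 1) :: leftCol s else leftCol s := by
  simp only [leftCol, List.map_cons, List.filter_cons]
  by_cases h : 0 < x - 1 <;> simp [h]

lemma leftCol_filter_sub (s : List ℕ) (i : ℕ) :
    leftCol ((s.map (· - i)).filter (0 < ·)) = (s.map (· - (i+1))).filter (0 < ·) := by
  induction s with
  | nil => simp [leftCol]
  | cons a t ih =>
    simp only [List.map_cons, List.filter_cons]
    by_cases h : 0 < a - i
    · simp only [h, decide_true, if_true, leftCol_cons, ih]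
      by_cases h2 : 0 < a - i - 1
      · have h3 : 0 < a - (i+1) := by omega
        have h4 : a - i - 1 = a - (i+1) := by omega
        simp [h2, h3, h4]
      · have h3 : ¬ 0 < a - (i+1) := by omega
        simp [h2, h3]
    · have h3 : ¬ 0 < a - (i+1) := by omega
      simp [h, h3, ih]

lemma tail_filter_sub (s : List ℕ) (i : ℕ) (hs : s.Pairwise (· ≥ ·)) :
    ((s.map (· - i)).filter (0 < ·)).tail = (s.tail.map (· - i)).filter (0 < ·) := by
  cases s with
  | nil => simp
  | cons a t =>
    simp only [List.map_cons, List.filter_cons, List.tail_cons]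
    by_cases h : 0 < a - i
    · simp [h]
    · have hall : ∀ x ∈ t, a ≥ x := (List.pairwise_cons.mp hs).1
      have : (t.map (· - i)).filter (0 < ·) = [] := by
        rw [List.filter_eq_nil_iff]
        intro x hx
        simp only [List.mem_map] at hx
        obtain ⟨y, hy, rfl⟩ := hx
        have := hall y hy
        simp; omega
      simp [h, this]

lemma mem_drop_le (l : List ℕ) (hl : l.Pairwise (· ≥ ·)) (j : ℕ) (hj : j < l.length)
    (x : ℕ) (hx : x ∈ l.drop j) : x ≤ l.getD j 0 := by
  have hd : l.drop j = l[j] :: l.drop (j+1) := List.drop_eq_getElem_cons hj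
  have hs : (l.drop j).Pairwise (· ≥ ·) := List.Pairwise.sublist (List.drop_sublist j l) hl
  rw [hd] at hx hs
  rw [List.getD_eq_getElem l 0 hj]
  rcases List.mem_cons.mp hx with h | h
  · omega
  · exact (List.pairwise_cons.mp hs).1 x h

lemma reach_shape (l : List ℕ) (hl : IsPartition l) (μ : List ℕ) (h : Reachable l μ) :
    ∃ p : ℕ × ℕ, 1 ≤ p.1 + p.2 ∧ μ = gpos l p := by
  have hdropsorted : ∀ j : ℕ, (l.drop j).Pairwise (· ≥ ·) :=
    fun j => List.Pairwise.sublist (List.drop_sublist j l) hl.1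
  have base : ∀ m, Move l m → ∃ p : ℕ × ℕ, 1 ≤ p.1 + p.2 ∧ m = gpos l p := by
    intro m hm
    rcases hm.2 with rfl | rfl
    · exact ⟨(1, 0), by simp, by simp [gpos, leftCol]⟩
    · refine ⟨(0, 1), by simp, ?_⟩
      have : ∀ x ∈ l.tail, 0 < x := fun x hx => hl.2 x (List.mem_of_mem_tail hx)
      unfold gpos topRow
      simp only [List.drop_one]
      rw [show l.tail.map (· - 0) = l.tail by simp]
      symm
      rw [List.filter_eq_self]
      intro x hx
      simpa using this x hx
  induction h with
  | single hm => exact base _ hm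
  | tail _ hm ih =>
    obtain ⟨⟨i, j⟩, hp, rfl⟩ := ih
    rcases hm.2 with rfl | rfl
    · refine ⟨(i + 1, j), by omega, ?_⟩
      dsimp only [gpos]
      exact leftCol_filter_sub (l.drop j) i
    · refine ⟨(i, j + 1), by omega, ?_⟩
      dsimp only [gpos, topRow]
      rw [tail_filter_sub _ _ (hdropsorted j), List.tail_drop]

lemma gpos_ne_nil (l : List ℕ) (hl : l.Pairwise (· ≥ ·)) (p : ℕ × ℕ)
    (h : gpos l p ≠ []) : p.2 < l.length ∧ p.1 < l.getD p.2 0 := by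
  by_cases hj : p.2 < l.length
  · refine ⟨hj, ?_⟩
    by_contra hi
    apply h
    unfold gpos
    rw [List.filter_eq_nil_iff]
    intro x hx
    simp only [List.mem_map] at hx
    obtain ⟨y, hy, rfl⟩ := hx
    have := mem_drop_le l hl p.2 hj y hy
    simp; omega
  · exfalso; apply h
    unfold gpos
    rw [List.drop_eq_nil_of_le (by omega)]
    simp

def cells (l : List ℕ) : Finset (ℕ × ℕ) :=
  (Finset.range l.length).biUnion (fun j => (Finset.range (l.getD j 0)).image (fun i => (i, j)))

lemma mem_cells (l : List ℕ) (p : ℕ × ℕ) :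
    p ∈ cells l ↔ p.2 < l.length ∧ p.1 < l.getD p.2 0 := by
  cases p with
  | mk i j =>
    simp only [cells, Finset.mem_biUnion, Finset.mem_range, Finset.mem_image]
    constructor
    · rintro ⟨j', hj', i', hi', h⟩
      cases h
      exact ⟨hj', hi'⟩
    · rintro ⟨hj, hi⟩
      exact ⟨j, hj, i, hi, rfl⟩

lemma sum_getD (l : List ℕ) : ∑ j ∈ Finset.range l.length, l.getD j 0 = l.sum := by
  induction l with
  | nil => simp
  | cons a t ih =>
    rw [List.length_cons, Finset.sum_range_succ']
    simp only [List.getD_cons_succ, List.getD_cons_zero, List.sum_cons, ih]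
    omega

lemma card_cells (l : List ℕ) : (cells l).card = l.sum := by
  rw [cells, Finset.card_biUnion]
  · rw [← sum_getD l]
    apply Finset.sum_congr rfl
    intro j _
    rw [Finset.card_image_of_injective _ (fun a b h => by simpa using h), Finset.card_range]
  · intro x _ y _ hxy
    simp only [Finset.disjoint_left, Finset.mem_image, Finset.mem_range]
    rintro p ⟨i, hi, rfl⟩ ⟨i', hi', h⟩
    exact hxy (congrArg Prod.snd h).symm

lemma exists_descent (l : List ℕ) (hl : IsPartition l) (hne : l ≠ [])
    (hrect : ¬ ∃ a b : ℕ, 0 < a ∧ 0 < b ∧ l = List.replicate b a) :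
    ∃ j0 : ℕ, j0 + 1 < l.length ∧ l.getD (j0+1) 0 < l.getD j0 0 := by
  by_contra hc
  push_neg at hc
  apply hrect
  have hlen : 0 < l.length := List.length_pos_iff.mpr hne
  have h0 : 0 < l.getD 0 0 := by
    apply hl.2
    rw [List.getD_eq_getElem l 0 hlen]
    exact List.getElem_mem hlen
  refine ⟨l.getD 0 0, l.length, h0, hlen, ?_⟩
  rw [List.eq_replicate_iff]
  refine ⟨rfl, ?_⟩
  have key : ∀ j, j < l.length → l.getD j 0 = l.getD 0 0 := by
    intro j
    induction j with
    | zero => intro _; rfl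
    | succ n ihn =>
      intro hj
      have hn : n < l.length := by omega
      have hge : l.getD n 0 ≥ l.getD (n+1) 0 := by
        have hd : l.drop n = l[n] :: l.drop (n+1) := List.drop_eq_getElem_cons hn
        have := mem_drop_le l hl.1 n hn (l.getD (n+1) 0) ?_
        · exact this
        · rw [List.getD_eq_getElem l 0 hj, List.drop_eq_getElem_cons hn]
          exact List.mem_cons.mpr (Or.inr (by
            rw [List.drop_eq_getElem_cons (show n+1 < l.length from hj)]
            exact List.mem_cons_self))
      have hle := hc n hj
      rw [← ihn hn]
      omega
  intro b hb
  obtain ⟨k, hk, rfl⟩ := List.getElem_of_mem hb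
  rw [← List.getD_eq_getElem l 0 hk]
  exact key k hk

lemma gpos_descent (l : List ℕ) (hl : IsPartition l) (j0 : ℕ) (hj : j0 + 1 < l.length)
    (hd : l.getD (j0+1) 0 < l.getD j0 0) :
    gpos l (l.getD j0 0 - 1, j0) = [1] := by
  have hj0 : j0 < l.length := by omega
  unfold gpos
  rw [List.drop_eq_getElem_cons hj0]
  simp only [List.map_cons, List.filter_cons]
  rw [← List.getD_eq_getElem l 0 hj0]
  have h1 : l.getD j0 0 - (l.getD j0 0 - 1) = 1 := by
    have : 0 < l.getD (j0+1) 0 := by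
      apply hl.2
      rw [List.getD_eq_getElem l 0 hj]
      exact List.getElem_mem hj
    omega
  rw [h1]
  have h2 : ((l.drop (j0+1)).map (· - (l.getD j0 0 - 1))).filter (0 < ·) = [] := by
    rw [List.filter_eq_nil_iff]
    intro x hx
    simp only [List.mem_map] at hx
    obtain ⟨y, hy, rfl⟩ := hx
    have hle := mem_drop_le l hl.1 (j0+1) hj y hy
    simp only [decide_eq_true_eq]
    omega
  rw [h2]
  simp

lemma gpos_last (l : List ℕ) (hl : IsPartition l) (hne : l ≠ []) :
    gpos l (l.getD (l.length - 1) 0 - 1, l.length - 1) = [1] := by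
  have hlen : 0 < l.length := List.length_pos_iff.mpr hne
  have hk : l.length - 1 < l.length := by omega
  unfold gpos
  rw [List.drop_eq_getElem_cons hk]
  have hnil : l.drop (l.length - 1 + 1) = [] := List.drop_eq_nil_of_le (by omega)
  rw [hnil]
  simp only [List.map_cons, List.map_nil, List.filter_cons, List.filter_nil]
  rw [← List.getD_eq_getElem l 0 hk]
  have h0 : 0 < l.getD (l.length - 1) 0 := by
    apply hl.2
    rw [List.getD_eq_getElem l 0 hk]
    exact List.getElem_mem hk
  have h1 : l.getD (l.length - 1) 0 - (l.getD (l.length - 1) 0 - 1) = 1 := by omega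
  rw [h1]
  simp


/-- A non-rectangular partition of `N > 0` has strictly fewer than `N`
distinct partitions reachable from it in LCTR. -/
theorem reachable_card_lt_of_not_rectangle (N : ℕ) (hN : 0 < N) (l : List ℕ)
    (hl : IsPartition l) (hsum : l.sum = N)
    (hrect : ¬ ∃ a b : ℕ, 0 < a ∧ 0 < b ∧ l = List.replicate b a) :
    {μ : List ℕ | Reachable l μ}.Finite ∧
    {μ : List ℕ | Reachable l μ}.ncard < N := by
  have hne : l ≠ [] := by
    intro h; rw [h] at hsum; simp at hsum; omega
  have hlen : 0 < l.length := List.length_pos_iff.mpr hne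
  obtain ⟨j0, hj, hd⟩ := exists_descent l hl hne hrect
  set p1 : ℕ × ℕ := (l.getD j0 0 - 1, j0) with hp1
  set p2 : ℕ × ℕ := (l.getD (l.length - 1) 0 - 1, l.length - 1) with hp2
  have hg1 : gpos l p1 = [1] := gpos_descent l hl j0 hj hd
  have hg2 : gpos l p2 = [1] := gpos_last l hl hne
  have hpos1 : 0 < l.getD (j0+1) 0 := by
    apply hl.2
    rw [List.getD_eq_getElem l 0 hj]
    exact List.getElem_mem hj
  have hposlast : 0 < l.getD (l.length - 1) 0 := by
    apply hl.2
    rw [List.getD_eq_getElem l 0 (show l.length - 1 < l.length by omega)]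
    exact List.getElem_mem _
  have hp1mem : p1 ∈ cells l := by
    rw [mem_cells]
    constructor
    · simp only [hp1]; omega
    · simp only [hp1]; omega
  have hp2mem : p2 ∈ cells l := by
    rw [mem_cells]
    constructor
    · simp only [hp2]; omega
    · simp only [hp2]; omega
  have hp12 : p1 ≠ p2 := by
    intro h
    have := congrArg Prod.snd h
    simp only [hp1, hp2] at this
    omega
  have h00 : (0, 0) ∈ cells l := by
    rw [mem_cells]
    refine ⟨hlen, ?_⟩
    apply hl.2
    rw [List.getD_eq_getElem l 0 hlen]
    exact List.getElem_mem hlen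
  have hp1ne0 : p1 ≠ (0, 0) := by
    intro h
    have := congrArg Prod.fst h
    simp only [hp1] at this
    omega
  have hp2ne0 : p2 ≠ (0, 0) := by
    intro h
    have := congrArg Prod.snd h
    simp only [hp2] at this
    omega
  set S : Finset (ℕ × ℕ) := (cells l).erase (0, 0) with hS
  set F : Finset (List ℕ) := insert [] (S.image (gpos l)) with hF
  have hp1S : p1 ∈ S := Finset.mem_erase.mpr ⟨hp1ne0, hp1mem⟩
  have hp2S : p2 ∈ S := Finset.mem_erase.mpr ⟨hp2ne0, hp2mem⟩
  have hsub : {μ : List ℕ | Reachable l μ} ⊆ ↑F := by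
    intro μ hμ
    obtain ⟨p, hp, rfl⟩ := reach_shape l hl μ hμ
    by_cases hnil : gpos l p = []
    · rw [hnil]
      simp [hF]
    · have hc := gpos_ne_nil l hl.1 p hnil
      have hpne0 : p ≠ (0, 0) := by
        intro h
        rw [h] at hp
        simp at hp
      have hpS : p ∈ S := Finset.mem_erase.mpr ⟨hpne0, (mem_cells l p).mpr hc⟩
      simp only [hF, Finset.coe_insert, Set.mem_insert_iff, Finset.mem_coe]
      right
      exact Finset.mem_image.mpr ⟨p, hpS, rfl⟩
  have hfin : {μ : List ℕ | Reachable l μ}.Finite := Set.Finite.subset F.finite_toSet hsub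
  refine ⟨hfin, ?_⟩
  have hcard1 : {μ : List ℕ | Reachable l μ}.ncard ≤ F.card := by
    calc {μ : List ℕ | Reachable l μ}.ncard ≤ (↑F : Set (List ℕ)).ncard :=
          Set.ncard_le_ncard hsub F.finite_toSet
    _ = F.card := Set.ncard_coe_finset F
  have himg : S.image (gpos l) ⊆ (S.erase p1).image (gpos l) := by
    intro x hx
    obtain ⟨q, hq, rfl⟩ := Finset.mem_image.mp hx
    by_cases hq1 : q = p1
    · subst hq1
      exact Finset.mem_image.mpr ⟨p2, Finset.mem_erase.mpr ⟨hp12.symm, hp2S⟩, hg2.trans hg1.symm⟩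
    · exact Finset.mem_image.mpr ⟨q, Finset.mem_erase.mpr ⟨hq1, hq⟩, rfl⟩
  have hN2 : 2 ≤ N := by
    have := Finset.one_lt_card.mpr ⟨p1, hp1mem, p2, hp2mem, hp12⟩
    rw [card_cells l, hsum] at this
    omega
  have hFcard : F.card ≤ N - 1 := by
    calc F.card ≤ (S.image (gpos l)).card + 1 := Finset.card_insert_le _ _
    _ ≤ ((S.erase p1).image (gpos l)).card + 1 := by
        exact Nat.add_le_add_right (Finset.card_le_card himg) 1
    _ ≤ (S.erase p1).card + 1 := Nat.add_le_add_right (Finset.card_image_le) 1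
    _ = (S.card - 1) + 1 := by rw [Finset.card_erase_of_mem hp1S]
    _ = ((cells l).card - 1 - 1) + 1 := by rw [hS, Finset.card_erase_of_mem h00]
    _ ≤ N - 1 := by
        rw [card_cells l, hsum]
        have hScard : 2 ≤ S.card := Finset.one_lt_card.mpr ⟨p1, hp1S, p2, hp2S, hp12⟩
        rw [hS, Finset.card_erase_of_mem h00, card_cells l, hsum] at hScard
        omega
  omega
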